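/- Let v be a goods-allocation instance with m agents and n goods and let A be an allocation. Then there exist transfers q : Fin m → ℝ such that the mechanism (A, q) is proportional (i.e., v_i(A_i) − q_i ≥ (1/m)·Σ_{k ∈ Fin m} (v_i(A_k) − q_k) for every agent i) if and only if A is mean-efficient, i.e., Σ_{i ∈ Fin m} v_i(A_i) ≥ (1/m)·Σ_{i ∈ Fin m} v_i([n]). -/
import Mathlib


open Finset

noncomputable section

/-- The cost to machine `i` of the bundle of jobs assigned to machine `k` under allocation `A`. -/
def bundleCost {m n : ℕ} (c : Fin m → Fin n → ℝ) (A : Fin n → Fin m) (i k : Fin m) : ℝ :=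
  ∑ j ∈ Finset.univ.filter (fun j => A j = k), c i j

/-- The total cost to machine `i` of all jobs, `c_i([n])`. -/
def rowSum {m n : ℕ} (c : Fin m → Fin n → ℝ) (i : Fin m) : ℝ :=
  ∑ j, c i j

lemma sum_bundleCost {m n : ℕ} (c : Fin m → Fin n → ℝ) (A : Fin n → Fin m) (i : Fin m) :
    ∑ k : Fin m, bundleCost c A i k = rowSum c i := by
  unfold bundleCost rowSum
  rw [Finset.sum_fiberwise_of_maps_to (fun j _ => Finset.mem_univ (A j))]

/-- Goods version: an allocation can be made proportional with transfers iff it is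
mean-efficient. -/
theorem stmt_11 {m n : ℕ} (hm : 2 ≤ m) (hn : 2 ≤ n)
    (v : Fin m → Fin n → ℝ) (hv : ∀ i j, 0 ≤ v i j) (A : Fin n → Fin m) :
    (∃ q : Fin m → ℝ, ∀ i : Fin m,
        (1 / (m : ℝ)) * ∑ k : Fin m, (bundleCost v A i k - q k) ≤ bundleCost v A i i - q i)
    ↔ (1 / (m : ℝ)) * ∑ i : Fin m, rowSum v i ≤ ∑ i : Fin m, bundleCost v A i i := by
  have hm0 : (0 : ℝ) < m := by positivity
  constructor
  · rintro ⟨q, hq⟩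
    have key : ∀ i : Fin m, (1 / (m : ℝ)) * (rowSum v i - ∑ k : Fin m, q k)
        ≤ bundleCost v A i i - q i := by
      intro i
      have := hq i
      rwa [Finset.sum_sub_distrib, sum_bundleCost] at this
    have hsum := Finset.sum_le_sum (s := Finset.univ) (fun i _ => key i)
    rw [Finset.sum_sub_distrib] at hsum
    have hlhs : ∑ i : Fin m, (1 / (m : ℝ)) * (rowSum v i - ∑ k : Fin m, q k)
        = (1 / (m : ℝ)) * ∑ i : Fin m, rowSum v i - ∑ k : Fin m, q k := by
      rw [← Finset.mul_sum, Finset.sum_sub_distrib, Finset.sum_const, Finset.card_univ,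
        Fintype.card_fin, nsmul_eq_mul, mul_sub]
      congr 1
      field_simp
    rw [hlhs] at hsum
    linarith
  · intro h
    refine ⟨fun i => bundleCost v A i i - (1 / (m : ℝ)) * rowSum v i, fun i => ?_⟩
    have hQ : ∑ k : Fin m, (bundleCost v A k k - (1 / (m : ℝ)) * rowSum v k)
        = ∑ k : Fin m, bundleCost v A k k - (1 / (m : ℝ)) * ∑ k : Fin m, rowSum v k := by
      rw [Finset.sum_sub_distrib, Finset.mul_sum]
    have hQ0 : 0 ≤ ∑ k : Fin m, (bundleCost v A k k - (1 / (m : ℝ)) * rowSum v k) := by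
      rw [hQ]; linarith
    have hS : ∑ k : Fin m, (bundleCost v A i k -
        (bundleCost v A k k - (1 / (m : ℝ)) * rowSum v k))
        = rowSum v i - ∑ k : Fin m, (bundleCost v A k k - (1 / (m : ℝ)) * rowSum v k) := by
      rw [Finset.sum_sub_distrib, sum_bundleCost]
    rw [hS]
    have : (1 / (m : ℝ)) * (rowSum v i -
        ∑ k : Fin m, (bundleCost v A k k - (1 / (m : ℝ)) * rowSum v k))
        ≤ (1 / (m : ℝ)) * rowSum v i := by
      have := mul_le_mul_of_nonneg_left (sub_le_self (rowSum v i) hQ0)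
        (le_of_lt (by positivity : (0:ℝ) < 1 / (m:ℝ)))
      linarith
    linarith
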